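/- Let f : ℝ^d → ℝ^d be a function, S ⊆ {x : f(x) = x}, and suppose for each z ∈ S there is an open neighborhood U_z of z and a set G_z ⊆ ℝ^d of Lebesgue measure zero such that {x ∈ ℝ^d : f^k(x) ∈ U_z for all k ∈ ℕ₀} ⊆ G_z. Then there exists a set W ⊆ ℝ^d of Lebesgue measure zero such that { x ∈ ℝ^d : lim_{k→∞} f^k(x) exists and lies in S } ⊆ ⋃_{k∈ℕ₀} f^{−k}(W). -/
import Mathlib


open MeasureTheory Filter

/-- If every `z ∈ S` has an open neighborhood `U_z` such that the set of points whose entire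
orbit stays in `U_z` is contained in a Lebesgue null set, then there is a null set `W` such
that the stable set of `S` is contained in `⋃_{k} f^{−k}(W)`. -/
theorem stmt_9 (d : ℕ) (f : EuclideanSpace ℝ (Fin d) → EuclideanSpace ℝ (Fin d))
    (S : Set (EuclideanSpace ℝ (Fin d))) (hS : S ⊆ {x | f x = x})
    (hloc : ∀ z ∈ S, ∃ U : Set (EuclideanSpace ℝ (Fin d)), IsOpen U ∧ z ∈ U ∧
      ∃ G : Set (EuclideanSpace ℝ (Fin d)), volume G = 0 ∧
        {x | ∀ k : ℕ, f^[k] x ∈ U} ⊆ G) :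
    ∃ W : Set (EuclideanSpace ℝ (Fin d)), volume W = 0 ∧
      {x | ∃ y ∈ S, Tendsto (fun k => f^[k] x) atTop (nhds y)} ⊆
        ⋃ k : ℕ, f^[k] ⁻¹' W := by
  classical
  choose! U hUopen hzU G hG0 hGsub using hloc
  have hmem : ∀ z ∈ S, U z ∈ nhdsWithin z S := fun z hz =>
    nhdsWithin_le_nhds ((hUopen z hz).mem_nhds (hzU z hz))
  obtain ⟨T, hTS, hTc, hcov⟩ := TopologicalSpace.countable_cover_nhdsWithin hmem
  refine ⟨⋃ z ∈ T, G z, ?_, ?_⟩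
  · exact measure_biUnion_null_iff hTc |>.mpr fun z hz => hG0 z (hTS hz)
  · rintro x ⟨y, hyS, hy⟩
    obtain ⟨z, hzT, hyU⟩ : ∃ z ∈ T, y ∈ U z := by
      simpa using hcov hyS
    have hzS := hTS hzT
    have hev : ∀ᶠ k in atTop, f^[k] x ∈ U z :=
      hy ((hUopen z hzS).mem_nhds hyU)
    obtain ⟨N, hN⟩ := hev.exists_forall_of_atTop
    have horb : ∀ k : ℕ, f^[k] (f^[N] x) ∈ U z := by
      intro k
      rw [← Function.iterate_add_apply]
      exact hN (k + N) (Nat.le_add_left _ _)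
    have : f^[N] x ∈ G z := hGsub z hzS horb
    exact Set.mem_iUnion.mpr ⟨N, Set.mem_biUnion hzT this⟩
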